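/- arXiv:2006.06716 — 2 statements merged into one kernel-verified Lean document; each statement's English description precedes it below -/
import Mathlib

section
/- Let (V,d) be a finite metric space with |V| = n ≥ 2, and for each point i take N(i) = V∖{i}. Let 0 < t < 1 be such that for all distinct i, j in V, 1 − t ≥ (t/d(i,j)²)·max(1/d_i, 1/d_j). Then Σ_{unordered pairs {i,j} of distinct points} ( 1 − W(D_{t,i}, D_{t,j})/d(i,j) ) ≤ (n²/2)·t. -/
open Finset

/-- `A` is a coupling of the probability distributions `μ` and `ν`. -/
def IsCoupling {V : Type*} [Fintype V] (μ ν : V → ℝ) (A : V → V → ℝ) : Prop :=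
  (∀ u v, 0 ≤ A u v) ∧ (∀ u, ∑ v, A u v = μ u) ∧ (∀ v, ∑ u, A u v = ν v)

/-- The Wasserstein (transportation) cost between two probability distributions on a
finite metric space: the infimum (= minimum) over all couplings of the transport cost. -/
noncomputable def Wcost {V : Type*} [Fintype V] [MetricSpace V] (μ ν : V → ℝ) : ℝ :=
  sInf {c : ℝ | ∃ A : V → V → ℝ, IsCoupling μ ν A ∧ c = ∑ u, ∑ v, A u v * dist u v}

/-- `dd N i = Σ_{k ∈ N} d(i,k)^{-2}`. -/
noncomputable def dd {V : Type*} [MetricSpace V] (N : Finset V) (i : V) : ℝ :=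
  ∑ k ∈ N, ((dist i k)⁻¹) ^ 2

/-- `cc N i = Σ_{k ∈ N} d(i,k)^{-1}`. -/
noncomputable def cc {V : Type*} [MetricSpace V] (N : Finset V) (i : V) : ℝ :=
  ∑ k ∈ N, (dist i k)⁻¹

/-- The probability distribution `D_{t,i}` concentrated at `i` with mass `t` spread on the
neighbor set `N`. -/
noncomputable def Dprob {V : Type*} [MetricSpace V] [DecidableEq V]
    (N : Finset V) (t : ℝ) (i : V) : V → ℝ := fun v =>
  if v = i then 1 - t else if v ∈ N then t * ((dist i v)⁻¹) ^ 2 / dd N i else 0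

section AuxLemmas

variable {V : Type*} [Fintype V] [MetricSpace V] [DecidableEq V]

lemma dd_pos' (hn : 2 ≤ Fintype.card V) (i : V) : 0 < dd (Finset.univ.erase i) i := by
  have : (Finset.univ.erase i).Nonempty := by
    obtain ⟨j, hj⟩ := Fintype.exists_ne_of_one_lt_card (by omega) i
    exact ⟨j, Finset.mem_erase.2 ⟨hj, Finset.mem_univ j⟩⟩
  refine Finset.sum_pos (fun k hk => ?_) this
  have hk' : k ≠ i := Finset.ne_of_mem_erase hk
  have : 0 < dist i k := dist_pos.2 (Ne.symm hk')
  positivity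

lemma Dprob_nonneg' (hn : 2 ≤ Fintype.card V) {t : ℝ} (ht0 : 0 ≤ t) (ht1 : t ≤ 1) (i v : V) :
    0 ≤ Dprob (Finset.univ.erase i) t i v := by
  unfold Dprob
  split_ifs with h1 h2
  · linarith
  · have := dd_pos' hn i
    positivity
  · exact le_refl _

lemma sum_mul_Dprob' (t : ℝ) (i : V) (g : V → ℝ) :
    ∑ u, g u * Dprob (Finset.univ.erase i) t i u
      = g i * (1 - t) + ∑ u ∈ Finset.univ.erase i,
          g u * (t * ((dist i u)⁻¹) ^ 2 / dd (Finset.univ.erase i) i) := by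
  rw [← Finset.add_sum_erase _ _ (Finset.mem_univ i)]
  congr 1
  · simp [Dprob]
  · refine Finset.sum_congr rfl fun u hu => ?_
    have h1 : u ≠ i := Finset.ne_of_mem_erase hu
    simp [Dprob, h1, hu]

lemma sum_Dprob' (t : ℝ) (i : V) (hdd : 0 < dd (Finset.univ.erase i) i) :
    ∑ u, Dprob (Finset.univ.erase i) t i u = 1 := by
  have := sum_mul_Dprob' (V := V) t i (fun _ => 1)
  simp only [one_mul] at this
  rw [this, ← Finset.sum_div, ← Finset.mul_sum]
  rw [show ∑ u ∈ Finset.univ.erase i, ((dist i u)⁻¹)^2 = dd (Finset.univ.erase i) i from rfl]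
  field_simp
  ring

omit [DecidableEq V] in
lemma wcost_dual' (μ ν : V → ℝ) (hμ0 : ∀ v, 0 ≤ μ v) (hν0 : ∀ v, 0 ≤ ν v)
    (hμ1 : ∑ v, μ v = 1) (hν1 : ∑ v, ν v = 1)
    (f : V → ℝ) (hf : ∀ u v, f u - f v ≤ dist u v) :
    (∑ u, f u * μ u) - (∑ v, f v * ν v) ≤ Wcost μ ν := by
  refine le_csInf ?_ ?_
  · refine ⟨∑ u, ∑ v, (μ u * ν v) * dist u v, fun u v => μ u * ν v, ⟨?_, ?_, ?_⟩, rfl⟩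
    · exact fun u v => mul_nonneg (hμ0 u) (hν0 v)
    · intro u; rw [← Finset.mul_sum, hν1, mul_one]
    · intro v; rw [← Finset.sum_mul, hμ1, one_mul]
  · rintro c ⟨A, ⟨hA0, hA1, hA2⟩, rfl⟩
    have h1 : ∑ u, f u * μ u = ∑ u, ∑ v, f u * A u v := by
      refine Finset.sum_congr rfl fun u _ => ?_
      rw [← hA1 u, Finset.mul_sum]
    have h2 : ∑ v, f v * ν v = ∑ u, ∑ v, f v * A u v := by
      rw [Finset.sum_comm]
      refine Finset.sum_congr rfl fun v _ => ?_
      rw [← hA2 v, Finset.mul_sum]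
    rw [h1, h2, ← Finset.sum_sub_distrib]
    refine Finset.sum_le_sum fun u _ => ?_
    rw [← Finset.sum_sub_distrib]
    refine Finset.sum_le_sum fun v _ => ?_
    have h3 : f u * A u v - f v * A u v = (f u - f v) * A u v := by ring
    rw [h3]
    exact (mul_le_mul_of_nonneg_right (hf u v) (hA0 u v)).trans (le_of_eq (mul_comm _ _))

lemma termwise' (t x y a b : ℝ) (ht : 0 ≤ t) (hx : 0 < x) (hy : 0 < y) (ha : 0 < a)
    (hb : 0 < b) :
    0 ≤ (y*b - x*a) * (t*(a⁻¹)^2/x^2) - (y*b - x*a) * (t*(b⁻¹)^2/y^2) := by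
  have h : (y*b - x*a) * (t*(a⁻¹)^2/x^2) - (y*b - x*a) * (t*(b⁻¹)^2/y^2)
      = t * ((b*y - a*x)^2*(a*x+b*y)) / (a^2*b^2*x^2*y^2) := by
    field_simp
    ring
  rw [h]
  positivity

lemma isolated' (t x y D : ℝ) (ht : 0 ≤ t) (hx : 0 < x) (hy : 0 < y) (hD : 0 < D) :
    (x+y) * (D*(1-t) - t/(2*D)*(1/x^2 + 1/y^2))
      ≤ (y*D*(1-t) + (-(x*D))*(t*(D⁻¹)^2/x^2)) - ((-(x*D))*(1-t) + y*D*(t*(D⁻¹)^2/y^2)) := by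
  have h : ((y*D*(1-t) + (-(x*D))*(t*(D⁻¹)^2/x^2)) - ((-(x*D))*(1-t) + y*D*(t*(D⁻¹)^2/y^2)))
      - (x+y) * (D*(1-t) - t/(2*D)*(1/x^2 + 1/y^2))
      = t*(x+y)*(x-y)^2/(2*D*x^2*y^2) := by
    field_simp
    ring
  have h2 : 0 ≤ t*(x+y)*(x-y)^2/(2*D*x^2*y^2) := by positivity
  linarith

lemma pair_bound' (hn : 2 ≤ Fintype.card V) {t : ℝ} (ht0 : 0 < t) (ht1 : t < 1)
    {i j : V} (hij : i ≠ j) :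
    dist i j * (1-t) - t / (2 * dist i j) *
        (1 / dd (Finset.univ.erase i) i + 1 / dd (Finset.univ.erase j) j)
      ≤ Wcost (Dprob (Finset.univ.erase i) t i) (Dprob (Finset.univ.erase j) t j) := by
  have hDi : 0 < dd (Finset.univ.erase i) i := dd_pos' hn i
  have hDj : 0 < dd (Finset.univ.erase j) j := dd_pos' hn j
  set x : ℝ := Real.sqrt (dd (Finset.univ.erase i) i) with hxdef
  set y : ℝ := Real.sqrt (dd (Finset.univ.erase j) j) with hydef
  have hx : 0 < x := Real.sqrt_pos.2 hDi
  have hy : 0 < y := Real.sqrt_pos.2 hDj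
  have hx2 : x^2 = dd (Finset.univ.erase i) i := Real.sq_sqrt hDi.le
  have hy2 : y^2 = dd (Finset.univ.erase j) j := Real.sq_sqrt hDj.le
  have hD : 0 < dist i j := dist_pos.2 hij
  set g : V → ℝ := fun v => y * dist v j - x * dist v i with hgdef
  set f : V → ℝ := fun v => g v / (x + y) with hfdef
  have hxy : 0 < x + y := by linarith
  have hf : ∀ u v, f u - f v ≤ dist u v := by
    intro u v
    have h1 : dist u j - dist v j ≤ dist u v := by
      have := abs_dist_sub_le u v j
      have := abs_le.1 this
      linarith [this.2]
    have h2 : dist v i - dist u i ≤ dist u v := by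
      have := abs_dist_sub_le v u i
      have := abs_le.1 this
      rw [dist_comm v u] at this
      linarith [this.2]
    have : f u - f v = (y * (dist u j - dist v j) + x * (dist v i - dist u i)) / (x + y) := by
      simp only [hfdef, hgdef]
      field_simp
      ring
    rw [this, div_le_iff₀ hxy]
    nlinarith [mul_le_mul_of_nonneg_left h1 hy.le, mul_le_mul_of_nonneg_left h2 hx.le]
  have hW := wcost_dual' (Dprob (Finset.univ.erase i) t i) (Dprob (Finset.univ.erase j) t j)
    (Dprob_nonneg' hn ht0.le ht1.le i) (Dprob_nonneg' hn ht0.le ht1.le j)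
    (sum_Dprob' t i hDi) (sum_Dprob' t j hDj) f hf
  have hji : j ∈ Finset.univ.erase i := Finset.mem_erase.2 ⟨Ne.symm hij, Finset.mem_univ j⟩
  have hij' : i ∈ Finset.univ.erase j := Finset.mem_erase.2 ⟨hij, Finset.mem_univ i⟩
  have e1 : ∑ u, g u * Dprob (Finset.univ.erase i) t i u
      = g i * (1 - t) + (g j * (t * ((dist i j)⁻¹) ^ 2 / dd (Finset.univ.erase i) i)
        + ∑ u ∈ (Finset.univ.erase i).erase j,
            g u * (t * ((dist i u)⁻¹) ^ 2 / dd (Finset.univ.erase i) i)) := by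
    rw [sum_mul_Dprob', ← Finset.add_sum_erase _ _ hji]
  have e2 : ∑ u, g u * Dprob (Finset.univ.erase j) t j u
      = g j * (1 - t) + (g i * (t * ((dist j i)⁻¹) ^ 2 / dd (Finset.univ.erase j) j)
        + ∑ u ∈ (Finset.univ.erase i).erase j,
            g u * (t * ((dist j u)⁻¹) ^ 2 / dd (Finset.univ.erase j) j)) := by
    rw [sum_mul_Dprob', ← Finset.add_sum_erase _ _ hij', Finset.erase_right_comm]
  have hgi : g i = y * dist i j := by simp [hgdef]
  have hgj : g j = -(x * dist i j) := by simp [hgdef, dist_comm j i]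
  have key : (x + y) * (dist i j * (1-t) - t / (2 * dist i j) *
        (1 / dd (Finset.univ.erase i) i + 1 / dd (Finset.univ.erase j) j))
      ≤ (∑ u, g u * Dprob (Finset.univ.erase i) t i u)
        - ∑ u, g u * Dprob (Finset.univ.erase j) t j u := by
    rw [e1, e2, hgi, hgj]
    have hsum : 0 ≤ ∑ u ∈ (Finset.univ.erase i).erase j,
        (g u * (t * ((dist i u)⁻¹) ^ 2 / dd (Finset.univ.erase i) i)
          - g u * (t * ((dist j u)⁻¹) ^ 2 / dd (Finset.univ.erase j) j)) := by
      refine Finset.sum_nonneg fun u hu => ?_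
      have hui : u ≠ i := Finset.ne_of_mem_erase (Finset.mem_of_mem_erase hu)
      have huj : u ≠ j := Finset.ne_of_mem_erase hu
      have ha : 0 < dist i u := dist_pos.2 (Ne.symm hui)
      have hb : 0 < dist j u := dist_pos.2 (Ne.symm huj)
      have hgu : g u = y * dist j u - x * dist i u := by
        simp [hgdef, dist_comm u j, dist_comm u i]
      rw [hgu, ← hx2, ← hy2]
      exact termwise' t x y (dist i u) (dist j u) ht0.le hx hy ha hb
    rw [Finset.sum_sub_distrib] at hsum
    have hiso := isolated' t x y (dist i j) ht0.le hx hy hD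
    rw [hx2, hy2] at hiso
    rw [dist_comm j i]
    have h1x2 : 1/ dd (Finset.univ.erase i) i = 1/x^2 := by rw [hx2]
    have h1y2 : 1/ dd (Finset.univ.erase j) j = 1/y^2 := by rw [hy2]
    rw [h1x2, h1y2]
    rw [← hx2, ← hy2] at *
    linarith
  have hfg : (∑ u, f u * Dprob (Finset.univ.erase i) t i u)
      - ∑ u, f u * Dprob (Finset.univ.erase j) t j u
      = ((∑ u, g u * Dprob (Finset.univ.erase i) t i u)
        - ∑ u, g u * Dprob (Finset.univ.erase j) t j u) / (x + y) := by
    simp only [hfdef, div_mul_eq_mul_div, ← Finset.sum_div, sub_div]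
  rw [hfg] at hW
  refine le_trans ?_ hW
  rw [le_div_iff₀ hxy]
  rw [mul_comm] at key
  exact key

omit [MetricSpace V] in
lemma sum_offDiag'' (h : V × V → ℝ) :
    ∑ p ∈ Finset.univ.offDiag, h p = ∑ i, ∑ j ∈ Finset.univ.erase i, h (i, j) := by
  rw [show Finset.univ.offDiag = (Finset.univ ×ˢ Finset.univ).filter (fun a : V × V => a.1 ≠ a.2) by ext; simp, Finset.sum_filter, Finset.sum_product]
  refine Finset.sum_congr rfl fun i _ => ?_
  rw [← Finset.sum_filter]
  congr 1
  ext j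
  simp [Finset.mem_erase, ne_comm, eq_comm]

omit [MetricSpace V] in
lemma sum_sym2_filter' (B : Sym2 V → ℝ) :
    ∑ p ∈ Finset.univ.offDiag, B (Sym2.mk p.1 p.2)
      = ∑ e ∈ Finset.univ.filter (fun e : Sym2 V => ¬ e.IsDiag), 2 * B e := by
  have hmaps : ∀ p ∈ Finset.univ.offDiag (α := V),
      Sym2.mk p.1 p.2 ∈ Finset.univ.filter (fun e : Sym2 V => ¬ e.IsDiag) := by
    rintro ⟨p1, p2⟩ hp
    rw [Finset.mem_offDiag] at hp
    simp [Sym2.mk_isDiag_iff, hp.2.2]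
  rw [← Finset.sum_fiberwise_of_maps_to' hmaps B]
  refine Finset.sum_congr rfl fun e he => ?_
  induction e using Sym2.ind with
  | _ x y =>
    have hxy : x ≠ y := by
      simp only [Finset.mem_filter, Sym2.mk_isDiag_iff] at he
      exact he.2
    have hfib : {p ∈ Finset.univ.offDiag (α := V) | Sym2.mk p.1 p.2 = s(x, y)} = {(x, y), (y, x)} := by
      ext ⟨p1, p2⟩
      simp only [Finset.mem_filter, Finset.mem_offDiag, Finset.mem_insert,
        Finset.mem_singleton, Sym2.eq_iff, Prod.mk.injEq, Finset.mem_univ, true_and]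
      constructor
      · rintro ⟨-, (⟨rfl, rfl⟩ | ⟨rfl, rfl⟩)⟩
        · exact Or.inl ⟨rfl, rfl⟩
        · exact Or.inr ⟨rfl, rfl⟩
      · rintro (⟨rfl, rfl⟩ | ⟨rfl, rfl⟩)
        · exact ⟨hxy, Or.inl ⟨rfl, rfl⟩⟩
        · exact ⟨hxy.symm, Or.inr ⟨rfl, rfl⟩⟩
    rw [Finset.sum_const, hfib]
    rw [Finset.card_insert_of_notMem (by simp [Prod.ext_iff, hxy]), Finset.card_singleton]
    push_cast [nsmul_eq_mul]
    ring

end AuxLemmas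

theorem complete_graph_action_upper_bound {V : Type*} [Fintype V] [MetricSpace V]
    [DecidableEq V] (hn : 2 ≤ Fintype.card V)
    (t : ℝ) (ht0 : 0 < t) (ht1 : t < 1)
    (ht2 : ∀ i j : V, i ≠ j → 1 - t ≥ t / (dist i j) ^ 2 *
      max (1 / dd (Finset.univ.erase i) i) (1 / dd (Finset.univ.erase j) j))
    (F : Sym2 V → ℝ)
    (hF : ∀ i j : V, i ≠ j → F s(i, j) =
      1 - Wcost (Dprob (Finset.univ.erase i) t i) (Dprob (Finset.univ.erase j) t j) / dist i j) :
    ∑ e ∈ Finset.univ.filter (fun e : Sym2 V => ¬ e.IsDiag), F e ≤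
      ((Fintype.card V : ℝ) ^ 2 / 2) * t := by
  classical
  set B : Sym2 V → ℝ := Sym2.lift ⟨fun i j => t + t/2 * (((dist i j)⁻¹)^2 *
      ((dd (Finset.univ.erase i) i)⁻¹ + (dd (Finset.univ.erase j) j)⁻¹)),
    fun i j => by simp only []; rw [dist_comm]; ring⟩ with hBdef
  have hBmk : ∀ i j : V, B s(i, j) = t + t/2 * (((dist i j)⁻¹)^2 *
      ((dd (Finset.univ.erase i) i)⁻¹ + (dd (Finset.univ.erase j) j)⁻¹)) := by
    intro i j
    rw [hBdef, Sym2.lift_mk]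
  -- Step 1: F e ≤ B e on non-diagonal classes
  have step1 : ∑ e ∈ Finset.univ.filter (fun e : Sym2 V => ¬ e.IsDiag), F e
      ≤ ∑ e ∈ Finset.univ.filter (fun e : Sym2 V => ¬ e.IsDiag), B e := by
    refine Finset.sum_le_sum fun e he => ?_
    induction e using Sym2.ind with
    | _ i j =>
      have hij : i ≠ j := by
        simp only [Finset.mem_filter, Sym2.mk_isDiag_iff] at he
        exact he.2
      have hDi : 0 < dd (Finset.univ.erase i) i := dd_pos' hn i
      have hDj : 0 < dd (Finset.univ.erase j) j := dd_pos' hn j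
      have hD : 0 < dist i j := dist_pos.2 hij
      rw [hF i j hij, hBmk i j]
      have hpb := pair_bound' hn ht0 ht1 hij
      have hdiv : (dist i j * (1-t) - t / (2 * dist i j) *
            (1 / dd (Finset.univ.erase i) i + 1 / dd (Finset.univ.erase j) j)) / dist i j
          ≤ Wcost (Dprob (Finset.univ.erase i) t i) (Dprob (Finset.univ.erase j) t j)
              / dist i j := by
        gcongr
      have hident : 1 - (dist i j * (1-t) - t / (2 * dist i j) *
            (1 / dd (Finset.univ.erase i) i + 1 / dd (Finset.univ.erase j) j)) / dist i j
          = t + t/2 * (((dist i j)⁻¹)^2 *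
            ((dd (Finset.univ.erase i) i)⁻¹ + (dd (Finset.univ.erase j) j)⁻¹)) := by
        field_simp
        ring
      linarith
  refine step1.trans ?_
  -- Step 2: fold to the off-diagonal double sum
  have step2 : ∑ p ∈ Finset.univ.offDiag (α := V), B (Sym2.mk p.1 p.2)
      = 2 * ∑ e ∈ Finset.univ.filter (fun e : Sym2 V => ¬ e.IsDiag), B e := by
    rw [sum_sym2_filter' B, Finset.mul_sum]
  -- Step 3: symmetrize the off-diagonal sum
  have hswap : ∑ p ∈ Finset.univ.offDiag (α := V),
        t/2 * (((dist p.1 p.2)⁻¹)^2 * (dd (Finset.univ.erase p.2) p.2)⁻¹)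
      = ∑ p ∈ Finset.univ.offDiag (α := V),
        t/2 * (((dist p.1 p.2)⁻¹)^2 * (dd (Finset.univ.erase p.1) p.1)⁻¹) := by
    refine Finset.sum_nbij' (fun p => (p.2, p.1)) (fun p => (p.2, p.1)) ?_ ?_ ?_ ?_ ?_
    · rintro ⟨a, b⟩ h; simp only [Finset.mem_offDiag] at *; exact ⟨h.2.1, h.1, h.2.2.symm⟩
    · rintro ⟨a, b⟩ h; simp only [Finset.mem_offDiag] at *; exact ⟨h.2.1, h.1, h.2.2.symm⟩
    · rintro ⟨a, b⟩ _; rfl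
    · rintro ⟨a, b⟩ _; rfl
    · rintro ⟨a, b⟩ _; simp [dist_comm]
  have step3 : ∑ p ∈ Finset.univ.offDiag (α := V), B (Sym2.mk p.1 p.2)
      = (Fintype.card V : ℝ)^2 * t := by
    have expand : ∀ p : V × V, B (Sym2.mk p.1 p.2)
        = (t + t/2 * (((dist p.1 p.2)⁻¹)^2 * (dd (Finset.univ.erase p.1) p.1)⁻¹))
          + t/2 * (((dist p.1 p.2)⁻¹)^2 * (dd (Finset.univ.erase p.2) p.2)⁻¹) := by
      rintro ⟨a, b⟩
      rw [show Sym2.mk (a, b).1 (a, b).2 = s(a, b) from rfl, hBmk a b]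
      ring
    rw [Finset.sum_congr rfl fun p _ => expand p, Finset.sum_add_distrib, hswap,
      ← Finset.sum_add_distrib]
    have merge : ∀ p : V × V,
        (t + t/2 * (((dist p.1 p.2)⁻¹)^2 * (dd (Finset.univ.erase p.1) p.1)⁻¹))
          + t/2 * (((dist p.1 p.2)⁻¹)^2 * (dd (Finset.univ.erase p.1) p.1)⁻¹)
        = t + t * (((dist p.1 p.2)⁻¹)^2 * (dd (Finset.univ.erase p.1) p.1)⁻¹) := by
      intro p; ring
    rw [Finset.sum_congr rfl fun p _ => merge p]
    rw [sum_offDiag'' (fun p : V × V =>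
      t + t * (((dist p.1 p.2)⁻¹)^2 * (dd (Finset.univ.erase p.1) p.1)⁻¹))]
    have inner : ∀ i : V, ∑ j ∈ Finset.univ.erase i,
        (t + t * (((dist i j)⁻¹)^2 * (dd (Finset.univ.erase i) i)⁻¹))
        = (Fintype.card V : ℝ) * t := by
      intro i
      have hDi : 0 < dd (Finset.univ.erase i) i := dd_pos' hn i
      rw [Finset.sum_add_distrib, Finset.sum_const]
      have h1 : ∑ j ∈ Finset.univ.erase i,
          t * (((dist i j)⁻¹)^2 * (dd (Finset.univ.erase i) i)⁻¹)
          = t * ((dd (Finset.univ.erase i) i) * (dd (Finset.univ.erase i) i)⁻¹) := by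
        rw [← Finset.mul_sum, ← Finset.sum_mul]
        rw [show ∑ j ∈ Finset.univ.erase i, ((dist i j)⁻¹)^2
          = dd (Finset.univ.erase i) i from rfl]
      rw [h1, mul_inv_cancel₀ hDi.ne', mul_one]
      rw [Finset.card_erase_of_mem (Finset.mem_univ i), Finset.card_univ]
      have h2 : 2 ≤ Fintype.card V := hn
      have : ((Fintype.card V - 1 : ℕ) : ℝ) = (Fintype.card V : ℝ) - 1 := by
        push_cast [Nat.cast_sub (by omega : 1 ≤ Fintype.card V)]
        ring
      rw [nsmul_eq_mul, this]
      ring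
    rw [Finset.sum_congr rfl fun i _ => inner i, Finset.sum_const, Finset.card_univ,
      nsmul_eq_mul]
    ring
  have : ∑ e ∈ Finset.univ.filter (fun e : Sym2 V => ¬ e.IsDiag), B e
      = (Fintype.card V : ℝ)^2 / 2 * t := by
    have := step2.symm.trans step3
    linarith
  linarith [this.le, this]
end

section
/- Let a: ℤ → ℝ_{>0} satisfy the T_1 equation of motion at every index n, and suppose a is not constant. Then a is strictly monotonic: either a_n < a_{n+1} for all n ∈ ℤ, or a_n > a_{n+1} for all n ∈ ℤ. -/
lemma t1_key (x y z : ℝ) (hx : 0 < x) (hy : 0 < y) (hz : 0 < z)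
    (h : y * ((x+y)^2/(x^2+y^2)^2 + (y+z)^2/(y^2+z^2)^2)
      - (x+y)/(x^2+y^2) - (y+z)/(y^2+z^2) = 0) :
    ((x+y)*x*(y^2+z^2)^2) * (y-x) = ((y+z)*z*(x^2+y^2)^2) * (z-y) := by
  have hp : (x^2+y^2) ≠ 0 := by positivity
  have hq : (y^2+z^2) ≠ 0 := by positivity
  have hpq : (x^2+y^2)*(y^2+z^2) ≠ 0 := mul_ne_zero hp hq
  field_simp at h
  have H : (((x+y)*x*(y^2+z^2)^2) * (y-x)) * ((x^2+y^2)*(y^2+z^2))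
      = (((y+z)*z*(x^2+y^2)^2) * (z-y)) * ((x^2+y^2)*(y^2+z^2)) := by
    linear_combination ((x^2+y^2)*(y^2+z^2)) * h
  exact mul_right_cancel₀ hpq H

lemma t1_sgn {A B s t : ℝ} (hA : 0 < A) (hB : 0 < B) (h : A*s = B*t) :
    (0 < s ↔ 0 < t) ∧ (s < 0 ↔ t < 0) ∧ (s = 0 ↔ t = 0) := by
  refine ⟨⟨fun h' => ?_, fun h' => ?_⟩, ⟨fun h' => ?_, fun h' => ?_⟩,
    ⟨fun h' => ?_, fun h' => ?_⟩⟩ <;> nlinarith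

/-- The `T₁` equation of motion at index `n` for the bi-infinite sequence of edge
lengths `a : ℤ → ℝ`. -/
def T1EoM (a : ℤ → ℝ) (n : ℤ) : Prop :=
  (a n)⁻¹ * (((a (n - 1))⁻¹ + (a n)⁻¹) ^ 2 / (((a (n - 1))⁻¹) ^ 2 + ((a n)⁻¹) ^ 2) ^ 2
      + ((a n)⁻¹ + (a (n + 1))⁻¹) ^ 2 / (((a n)⁻¹) ^ 2 + ((a (n + 1))⁻¹) ^ 2) ^ 2)
    - ((a (n - 1))⁻¹ + (a n)⁻¹) / (((a (n - 1))⁻¹) ^ 2 + ((a n)⁻¹) ^ 2)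
    - ((a n)⁻¹ + (a (n + 1))⁻¹) / (((a n)⁻¹) ^ 2 + ((a (n + 1))⁻¹) ^ 2) = 0

theorem t1_strictly_monotonic_of_nonconstant (a : ℤ → ℝ) (hpos : ∀ n, 0 < a n)
    (heom : ∀ n, T1EoM a n) (hnc : ¬ ∀ m n, a m = a n) :
    (∀ n, a n < a (n + 1)) ∨ (∀ n, a (n + 1) < a n) := by
  set b : ℤ → ℝ := fun n => (a n)⁻¹ with hbdef
  have hb : ∀ n, 0 < b n := fun n => inv_pos.2 (hpos n)
  -- sign propagation at each index
  have same : ∀ n : ℤ,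
      (0 < b n - b (n-1) ↔ 0 < b (n+1) - b n) ∧
      (b n - b (n-1) < 0 ↔ b (n+1) - b n < 0) ∧
      (b n - b (n-1) = 0 ↔ b (n+1) - b n = 0) := by
    intro n
    have h := heom n
    have hk := t1_key (b (n-1)) (b n) (b (n+1)) (hb _) (hb _) (hb _) h
    have hA : (0:ℝ) < (b (n-1) + b n) * b (n-1) * ((b n)^2 + (b (n+1))^2)^2 := by
      have h1 := hb (n-1); have h2 := hb n; have h3 := hb (n+1); positivity
    have hB : (0:ℝ) < (b n + b (n+1)) * b (n+1) * ((b (n-1))^2 + (b n)^2)^2 := by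
      have h1 := hb (n-1); have h2 := hb n; have h3 := hb (n+1); positivity
    have hk' : ((b (n-1) + b n) * b (n-1) * ((b n)^2 + (b (n+1))^2)^2) * (b n - b (n-1))
        = ((b n + b (n+1)) * b (n+1) * ((b (n-1))^2 + (b n)^2)^2) * (b (n+1) - b n) := by
      linear_combination hk
    exact t1_sgn hA hB hk'
  rcases lt_trichotomy (b 0) (b 1) with h01 | h01 | h01
  · -- b increasing, a decreasing
    right
    have inc : ∀ n : ℤ, b n < b (n+1) := by
      intro n
      induction n using Int.induction_on with
      | zero => exact h01
      | succ k ih =>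
        have e : (k:ℤ) + 1 - 1 = k := by ring
        have := ((same (k+1)).1).1 (by rw [e]; linarith)
        linarith
      | pred k ih =>
        have e : (-(k:ℤ) - 1) + 1 = -k := by ring
        have h2 := ((same (-k)).1).2 (by linarith)
        have e2 : (-(k:ℤ)) - 1 = -k - 1 := by ring
        rw [e2] at h2
        rw [e]
        linarith
    intro n
    have := inc n
    exact (inv_lt_inv₀ (hpos n) (hpos (n+1))).1 this
  · -- constant, contradiction
    exfalso
    apply hnc
    have dall : ∀ n : ℤ, b n = b (n+1) := by
      intro n
      induction n using Int.induction_on with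
      | zero => exact h01
      | succ k ih =>
        have e : (k:ℤ) + 1 - 1 = k := by ring
        have := ((same (k+1)).2.2).1 (by rw [e]; linarith)
        linarith
      | pred k ih =>
        have h2 := ((same (-k)).2.2).2 (by linarith)
        have e2 : (-(k:ℤ)) - 1 = -k - 1 := by ring
        rw [e2] at h2
        have e : (-(k:ℤ) - 1) + 1 = -k := by ring
        rw [e]
        linarith
    have const : ∀ n : ℤ, b n = b 0 := by
      intro n
      induction n using Int.induction_on with
      | zero => rfl
      | succ k ih => rw [← dall k]; exact ih
      | pred k ih =>
        have := dall (-k - 1)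
        have e : (-(k:ℤ) - 1) + 1 = -k := by ring
        rw [e] at this
        rw [this]; exact ih
    intro m n
    have hm : a m = (b m)⁻¹ := by simp [hbdef]
    have hn2 : a n = (b n)⁻¹ := by simp [hbdef]
    rw [hm, hn2, const m, const n]
  · -- b decreasing, a increasing
    left
    have dec : ∀ n : ℤ, b (n+1) < b n := by
      intro n
      induction n using Int.induction_on with
      | zero => exact h01
      | succ k ih =>
        have e : (k:ℤ) + 1 - 1 = k := by ring
        have := ((same (k+1)).2.1).1 (by rw [e]; linarith)
        linarith
      | pred k ih =>
        have h2 := ((same (-k)).2.1).2 (by linarith)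
        have e2 : (-(k:ℤ)) - 1 = -k - 1 := by ring
        rw [e2] at h2
        have e : (-(k:ℤ) - 1) + 1 = -k := by ring
        rw [e]
        linarith
    intro n
    exact (inv_lt_inv₀ (hpos (n+1)) (hpos n)).1 (dec n)
end
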